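/- For every real constant α ≥ 1 and every fixed positive integer k there exist a constant c_k > 0 and an integer N_k such that for all n ≥ N_k the following holds. If A is a non-adaptive randomized group-testing algorithm on item set Fin n making s tests such that for every defective set I ⊆ Fin n, with probability at least 2/3 over A, the output D satisfies |I| ≤ D ≤ α·|I|, then s ≥ c_k · (log₂ n) / log^{[k]} n. -/

import Mathlib

open scoped ENNReal

/-- Iterated binary logarithm: `iterLog 0 x = x`, `iterLog (k+1) x = log₂ (iterLog k x)`. -/
noncomputable def iterLog : ℕ → ℝ → ℝ
  | 0, x => x
  | k + 1, x => Real.logb 2 (iterLog k x)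

/-- `logStar n` is the least `k` with `log^{[k]} n < 2`. -/
noncomputable def logStar (n : ℕ) : ℕ := sInf {k : ℕ | iterLog k (n : ℝ) < 2}

/-- A non-adaptive randomized group-testing algorithm on `Fin n` making `s` tests:
a PMF over pairs (tests, estimator). -/
abbrev Alg (n s : ℕ) : Type := PMF ((Fin s → Finset (Fin n)) × ((Fin s → Bool) → ℕ))

/-- The answer vector of the tests `Q` on the defective set `I`. -/
def answers {n s : ℕ} (Q : Fin s → Finset (Fin n)) (I : Finset (Fin n)) : Fin s → Bool :=
  fun i => decide ((Q i ∩ I).Nonempty)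

/-- The probability, over the algorithm `A`, that the output `D` satisfies
`|I| ≤ D ≤ α·|I|` on the defective set `I`. -/
noncomputable def estProb {n s : ℕ} (A : Alg n s) (α : ℝ) (I : Finset (Fin n)) : ℝ≥0∞ :=
  A.toOuterMeasure
    {p | (I.card : ℝ) ≤ (p.2 (answers p.1 I) : ℝ) ∧ (p.2 (answers p.1 I) : ℝ) ≤ α * I.card}

def tower : ℕ → ℕ
  | 0 => 2
  | k + 1 => 2 ^ tower k

lemma iterLog_succ_comm (k : ℕ) (x : ℝ) :
    iterLog (k+1) x = iterLog k (Real.logb 2 x) := by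
  induction k with
  | zero => rfl
  | succ k ih =>
    show Real.logb 2 (iterLog (k+1) x) = Real.logb 2 (iterLog k (Real.logb 2 x))
    rw [ih]

lemma two_le_iterLog (k : ℕ) (x : ℝ) (hx : (tower k : ℝ) ≤ x) : 2 ≤ iterLog k x := by
  induction k generalizing x with
  | zero => simpa [iterLog, tower] using hx
  | succ k ih =>
    rw [iterLog_succ_comm]
    apply ih
    have h2 : ((2:ℝ)) ^ (tower k) ≤ x := by
      have : ((tower (k+1) : ℕ) : ℝ) = (2:ℝ) ^ (tower k) := by
        simp [tower]
      linarith [hx, this ▸ hx]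
    calc ((tower k : ℕ) : ℝ) = Real.logb 2 ((2:ℝ) ^ (tower k)) := by
          rw [Real.logb_pow, Real.logb_self_eq_one (by norm_num)]; ring
      _ ≤ Real.logb 2 x := Real.logb_le_logb_of_le (by norm_num) (by positivity) h2

lemma answers_subset {n s : ℕ} (Q : Fin s → Finset (Fin n)) {I J : Finset (Fin n)}
    (h : I ⊆ J) (i : Fin s) (hi : answers Q I i = true) : answers Q J i = true := by
  simp only [answers, decide_eq_true_eq] at *
  exact hi.mono (Finset.inter_subset_inter (subset_refl _) h)

lemma key_card {n s : ℕ} (α : ℝ) (B : ℕ) (hB : 2 ≤ B) (hαB : α ≤ (B:ℝ) - 1) (m : ℕ)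
    (I : ℕ → Finset (Fin n)) (hcard : ∀ j < m, (I j).card = B ^ (j+1))
    (hmono : ∀ j j', j ≤ j' → I j ⊆ I j')
    (Q : Fin s → Finset (Fin n)) (E : (Fin s → Bool) → ℕ) :
    ((Finset.range m).filter (fun j =>
      ((I j).card : ℝ) ≤ (E (answers Q (I j)) : ℝ) ∧
      (E (answers Q (I j)) : ℝ) ≤ α * (I j).card)).card ≤ s + 1 := by
  classical
  set T : ℕ → Finset (Fin s) :=
    fun j => Finset.univ.filter (fun i => answers Q (I j) i = true) with hT
  set S := (Finset.range m).filter (fun j =>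
      ((I j).card : ℝ) ≤ (E (answers Q (I j)) : ℝ) ∧
      (E (answers Q (I j)) : ℝ) ≤ α * (I j).card) with hS
  have hTmono : ∀ j j', j ≤ j' → T j ⊆ T j' := by
    intro j j' hjj i hi
    simp only [hT, Finset.mem_filter, Finset.mem_univ, true_and] at *
    exact answers_subset Q (hmono j j' hjj) i hi
  have hstrict : ∀ j ∈ S, ∀ j' ∈ S, j < j' → (T j).card < (T j').card := by
    intro j hj j' hj' hlt
    rw [hS, Finset.mem_filter, Finset.mem_range] at hj hj'
    obtain ⟨hjm, hj1, hj2⟩ := hj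
    obtain ⟨hjm', hj1', hj2'⟩ := hj'
    rw [hcard j hjm] at hj2
    rw [hcard j' hjm'] at hj1'
    have hBpos : (0:ℝ) < (B:ℝ) ^ (j+1) := by positivity
    have hEE : (E (answers Q (I j)) : ℝ) < (E (answers Q (I j')) : ℝ) := by
      have h1 : α * ((B:ℝ) ^ (j+1)) ≤ ((B:ℝ) - 1) * (B:ℝ) ^ (j+1) :=
        mul_le_mul_of_nonneg_right hαB (le_of_lt hBpos)
      have h2 : ((B:ℝ) - 1) * (B:ℝ) ^ (j+1) < (B:ℝ) ^ (j+2) := by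
        have : (B:ℝ) ^ (j+2) = (B:ℝ) * (B:ℝ) ^ (j+1) := by ring
        rw [this]
        exact mul_lt_mul_of_pos_right (by linarith) hBpos
      have h3 : ((B:ℝ)) ^ (j+2) ≤ ((B:ℝ)) ^ (j'+1) := by
        apply pow_le_pow_right₀ (by exact_mod_cast le_trans (by norm_num) hB)
        omega
      push_cast at hj2 hj1'
      calc (E (answers Q (I j)) : ℝ) ≤ α * ((B:ℝ) ^ (j+1)) := hj2
        _ ≤ ((B:ℝ) - 1) * (B:ℝ) ^ (j+1) := h1
        _ < (B:ℝ) ^ (j+2) := h2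
        _ ≤ ((B:ℝ)) ^ (j'+1) := h3
        _ ≤ (E (answers Q (I j')) : ℝ) := hj1'
    have hane : answers Q (I j) ≠ answers Q (I j') := by
      intro h
      rw [h] at hEE
      exact lt_irrefl _ hEE
    have hTne : T j ≠ T j' := by
      intro h
      apply hane
      funext i
      have hiff : (answers Q (I j) i = true) ↔ (answers Q (I j') i = true) := by
        constructor
        · intro hi
          have : i ∈ T j := by simp [hT, hi]
          rw [h] at this
          simpa [hT] using this
        · intro hi
          have : i ∈ T j' := by simp [hT, hi]
          rw [← h] at this
          simpa [hT] using this
      cases h1 : answers Q (I j) i <;> cases h2 : answers Q (I j') i <;> simp_all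
    exact Finset.card_lt_card (ssubset_of_subset_of_ne (hTmono j j' (le_of_lt hlt)) hTne)
  have hmaps : ∀ j ∈ S, (T j).card ∈ Finset.range (s + 1) := by
    intro j _
    rw [Finset.mem_range]
    have := Finset.card_le_univ (T j)
    simp only [Finset.card_univ, Fintype.card_fin] at this
    omega
  have hinj : Set.InjOn (fun j => (T j).card) ↑S := by
    intro a ha b hb hab
    by_contra hne
    rcases lt_or_gt_of_ne hne with h | h
    · exact absurd hab (ne_of_lt (hstrict a ha b hb h))
    · exact absurd hab.symm (ne_of_lt (hstrict b hb a ha h))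
  have := Finset.card_le_card_of_injOn (fun j => (T j).card) hmaps hinj
  simpa using this

theorem stmt1 (α : ℝ) (hα : 1 ≤ α) (k : ℕ) (hk : 0 < k) :
    ∃ c : ℝ, 0 < c ∧ ∃ N : ℕ, ∀ n : ℕ, N ≤ n → ∀ s : ℕ, ∀ A : Alg n s,
      (∀ I : Finset (Fin n), (2 / 3 : ℝ≥0∞) ≤ estProb A α I) →
      c * Real.logb 2 n / iterLog k n ≤ (s : ℝ) := by
  classical
  set B : ℕ := ⌈α⌉₊ + 1 with hBdef
  have hB : 2 ≤ B := by
    have : 1 ≤ ⌈α⌉₊ := Nat.one_le_ceil_iff.mpr (by linarith)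
    omega
  have hαB : α ≤ (B:ℝ) - 1 := by
    have := Nat.le_ceil α
    push_cast [hBdef]
    push_cast at this
    linarith
  set L : ℝ := Real.logb 2 B with hLdef
  have hL1 : 1 ≤ L := by
    calc (1:ℝ) = Real.logb 2 2 := (Real.logb_self_eq_one (by norm_num)).symm
      _ ≤ Real.logb 2 B := Real.logb_le_logb_of_le (by norm_num) (by norm_num)
          (by exact_mod_cast hB)
  have hLpos : 0 < L := lt_of_lt_of_le one_pos hL1
  refine ⟨1 / (3 * L), by positivity, max (max (tower k) (B ^ 5)) 2, ?_⟩
  intro n hn s A hA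
  have hn2 : 2 ≤ n := le_trans (le_max_right _ _) hn
  have htow : tower k ≤ n := le_trans (le_trans (le_max_left _ _) (le_max_left _ _)) hn
  have hB5 : B ^ 5 ≤ n := le_trans (le_trans (le_max_right _ _) (le_max_left _ _)) hn
  -- iterLog lower bound
  have hiter : 2 ≤ iterLog k n := two_le_iterLog k n (by exact_mod_cast htow)
  set m : ℕ := Nat.log B n with hmdef
  -- the chain of sets
  set I : ℕ → Finset (Fin n) := fun j =>
    (Finset.range (min (B ^ (j+1)) n)).attachFin
      (fun x hx => lt_of_lt_of_le (Finset.mem_range.mp hx) (min_le_right _ _)) with hIdef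
  have hsubn : ∀ j, j < m → B ^ (j+1) ≤ n := by
    intro j hj
    calc B ^ (j+1) ≤ B ^ m := Nat.pow_le_pow_right (by omega) (by omega)
      _ ≤ n := Nat.pow_log_le_self B (by omega)
  have hcard : ∀ j, j < m → (I j).card = B ^ (j+1) := by
    intro j hj
    rw [hIdef]
    simp only [Finset.card_attachFin, Finset.card_range]
    exact min_eq_left (hsubn j hj)
  have hmono : ∀ j j', j ≤ j' → I j ⊆ I j' := by
    intro j j' hjj x hx
    rw [hIdef, Finset.mem_attachFin] at *
    rw [Finset.mem_range] at *
    have : min (B ^ (j+1)) n ≤ min (B ^ (j'+1)) n := by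
      apply min_le_min_right
      exact Nat.pow_le_pow_right (by omega) (by omega)
    omega
  -- events
  set Sev : ℕ → Set ((Fin s → Finset (Fin n)) × ((Fin s → Bool) → ℕ)) := fun j =>
    {p | ((I j).card : ℝ) ≤ (p.2 (answers p.1 (I j)) : ℝ) ∧
         (p.2 (answers p.1 (I j)) : ℝ) ≤ α * (I j).card} with hSev
  -- upper bound on sum of probabilities
  have hupper : ∑ j ∈ Finset.range m, estProb A α (I j) ≤ ((s:ℝ≥0∞) + 1) := by
    have hest : ∀ j, estProb A α (I j) = ∑' p, (Sev j).indicator A p := by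
      intro j
      rw [estProb, PMF.toOuterMeasure_apply]
    calc ∑ j ∈ Finset.range m, estProb A α (I j)
        = ∑' p, ∑ j ∈ Finset.range m, (Sev j).indicator A p := by
          rw [Summable.tsum_finsetSum (fun i _ => ENNReal.summable)]
          exact Finset.sum_congr rfl (fun j _ => hest j)
      _ ≤ ∑' p, ((s:ℝ≥0∞) + 1) * A p := by
          apply ENNReal.tsum_le_tsum
          intro p
          have hpt : ∑ j ∈ Finset.range m, (Sev j).indicator A p
              = (((Finset.range m).filter (fun j => p ∈ Sev j)).card : ℝ≥0∞) * A p := by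
            rw [Finset.sum_indicator_eq_sum_filter]
            rw [Finset.sum_const, nsmul_eq_mul]
          rw [hpt]
          apply mul_le_mul_left
          have hkey := key_card α B hB hαB m I (fun j hj => hcard j hj) hmono p.1 p.2
          have heq : ((Finset.range m).filter (fun j => p ∈ Sev j))
              = ((Finset.range m).filter (fun j =>
                ((I j).card : ℝ) ≤ (p.2 (answers p.1 (I j)) : ℝ) ∧
                (p.2 (answers p.1 (I j)) : ℝ) ≤ α * (I j).card)) := by
            apply Finset.filter_congr
            intro j _
            simp [hSev, Set.mem_setOf_eq]
          rw [heq]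
          calc ((_ : ℕ) : ℝ≥0∞) ≤ ((s + 1 : ℕ) : ℝ≥0∞) := by exact_mod_cast hkey
            _ = (s:ℝ≥0∞) + 1 := by push_cast; ring
      _ = ((s:ℝ≥0∞) + 1) * ∑' p, A p := ENNReal.tsum_mul_left
      _ = ((s:ℝ≥0∞) + 1) := by rw [PMF.tsum_coe, mul_one]
  -- lower bound
  have hlower : (m : ℝ≥0∞) * (2/3) ≤ ∑ j ∈ Finset.range m, estProb A α (I j) := by
    calc (m : ℝ≥0∞) * (2/3) = ∑ _j ∈ Finset.range m, (2/3 : ℝ≥0∞) := by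
          rw [Finset.sum_const, Finset.card_range, nsmul_eq_mul]
      _ ≤ ∑ j ∈ Finset.range m, estProb A α (I j) :=
          Finset.sum_le_sum (fun j _ => hA (I j))
  have hENN : (m : ℝ≥0∞) * (2/3) ≤ (s:ℝ≥0∞) + 1 := le_trans hlower hupper
  -- convert to real
  have hreal : (m : ℝ) * (2/3) ≤ (s:ℝ) + 1 := by
    have hne1 : (m : ℝ≥0∞) * (2/3) ≠ ⊤ := by
      apply ENNReal.mul_ne_top (by simp)
      simp [ENNReal.div_eq_top]
    have hne2 : (s:ℝ≥0∞) + 1 ≠ ⊤ := by simp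
    have := ENNReal.toReal_le_toReal hne1 hne2 |>.mpr hENN
    simpa [ENNReal.toReal_mul, ENNReal.toReal_div, ENNReal.toReal_add] using this
  -- logarithmic bounds
  have hnpos : (0:ℝ) < n := by positivity
  have hlogn_nonneg : 0 ≤ Real.logb 2 n :=
    Real.logb_nonneg (by norm_num) (by exact_mod_cast (by omega : 1 ≤ n))
  have hmlog : Real.logb 2 n ≤ ((m:ℝ) + 1) * L := by
    have h1 : (n:ℝ) ≤ (B:ℝ) ^ (m+1) := by
      have := Nat.lt_pow_succ_log_self (show 1 < B by omega) n
      exact_mod_cast le_of_lt this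
    calc Real.logb 2 n ≤ Real.logb 2 ((B:ℝ) ^ (m+1)) :=
          Real.logb_le_logb_of_le (by norm_num) hnpos h1
      _ = ((m:ℝ) + 1) * L := by rw [Real.logb_pow, ← hLdef]; push_cast; ring
  have h5L : 5 * L ≤ Real.logb 2 n := by
    have h1 : ((B:ℝ)) ^ (5:ℕ) ≤ (n:ℝ) := by exact_mod_cast hB5
    calc 5 * L = Real.logb 2 ((B:ℝ) ^ (5:ℕ)) := by rw [Real.logb_pow, ← hLdef]; push_cast; ring
      _ ≤ Real.logb 2 n := Real.logb_le_logb_of_le (by norm_num) (by positivity) h1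
  -- final arithmetic
  have hfinal : 1 / (3 * L) * Real.logb 2 n ≤ (s:ℝ) := by
    rw [one_div, inv_mul_eq_div, div_le_iff₀ (by positivity : (0:ℝ) < 3 * L)]
    nlinarith [mul_le_mul_of_nonneg_right hreal hLpos.le, hmlog, h5L, hLpos, hlogn_nonneg]
  calc 1 / (3 * L) * Real.logb 2 n / iterLog k n ≤ 1 / (3 * L) * Real.logb 2 n := by
        apply div_le_self (by positivity) (by linarith)
    _ ≤ (s:ℝ) := hfinal
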